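/- Let R be a dense rooted-triplet instance over V, G ⊆ V a set of leaves such that R[G ∪ S] is consistent for every subset S of V \ G of size at most 2, with each leaf of V \ G having a fixed locus edge e in the tree consistent with R[G]. For a tree edge e, define on B_e (the leaves with locus e) the relation a <_e b iff there exists c ∈ G with ac|b ∈ R, and a ∼_e b iff neither a <_e b nor b <_e a. Then if additionally for every 4-subset with a unique new seed leaf no conflict exists (maximality of the conflict packing), <_e is a strict weak ordering: <_e is asymmetric and transitive, and ∼_e is transitive. -/

import Mathlib

/-- Rooted binary trees with leaves labelled by `V`. -/
inductive RTree (V : Type*) : Type _ where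
  | leaf : V → RTree V
  | node : RTree V → RTree V → RTree V

namespace RTree

variable {V : Type*} [DecidableEq V]

/-- The list of leaf labels of a tree, from left to right. -/
def leafList : RTree V → List V
  | .leaf x => [x]
  | .node l r => l.leafList ++ r.leafList

/-- The set of leaf labels of a tree. -/
def leaves (t : RTree V) : Finset V := t.leafList.toFinset

/-- A tree is proper when all its leaf labels are distinct. -/
def Proper (t : RTree V) : Prop := t.leafList.Nodup

/-- `Consistent T a b c` means that the rooted triplet `ab|c` is consistent
with `T`, i.e. the restriction of `T` to `{a, b, c}` is homeomorphic to the
rooted binary tree in which `a` and `b` are siblings below one child of the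
root, the other child being `c`. -/
def Consistent : RTree V → V → V → V → Prop
  | .leaf _, _, _, _ => False
  | .node l r, a, b, c =>
      (a ∈ l.leaves ∧ b ∈ l.leaves ∧ c ∈ l.leaves ∧ Consistent l a b c) ∨
      (a ∈ r.leaves ∧ b ∈ r.leaves ∧ c ∈ r.leaves ∧ Consistent r a b c) ∨
      (a ∈ l.leaves ∧ b ∈ l.leaves ∧ c ∈ r.leaves) ∨
      (a ∈ r.leaves ∧ b ∈ r.leaves ∧ c ∈ l.leaves)

end RTree

variable {V : Type*} [DecidableEq V]

/-- A dense rooted-triplet instance is encoded by a map `R` assigning to each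
`3`-subset `{a, b, c}` its chosen apex: `R {a, b, c} = c` means that the
triplet `ab|c` belongs to the instance. Validity requires the apex to belong
to the `3`-set. -/
def TripletValid (R : Finset V → V) (S : Finset V) : Prop :=
  ∀ a b c : V, a ∈ S → b ∈ S → c ∈ S → a ≠ b → a ≠ c → b ≠ c →
    R {a, b, c} ∈ ({a, b, c} : Finset V)

/-- `Realizes T R S`: every rooted triplet of the instance `R` on leaves of
`S` is consistent with the tree `T`. -/
def Realizes (T : RTree V) (R : Finset V → V) (S : Finset V) : Prop :=
  ∀ a b c : V, a ∈ S → b ∈ S → c ∈ S → a ≠ b → a ≠ c → b ≠ c →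
    R {a, b, c} = c → T.Consistent a b c

/-- The instance `R` restricted to `S` is consistent: some rooted binary tree
over `S` realizes all its triplets. -/
def TripletConsistentOn (R : Finset V → V) (S : Finset V) : Prop :=
  ∃ T : RTree V, T.Proper ∧ T.leaves = S ∧ Realizes T R S

/-- A leaf `x` of a conflict `C = {x, b, c, d}` is a seed if `C` remains a
conflict for every possible choice of the triplet on `C \ {x}`. -/
def RTISeed (R : Finset V → V) (x : V) (C : Finset V) : Prop :=
  x ∈ C ∧ ∀ y ∈ C.erase x,
    ¬ TripletConsistentOn (Function.update R (C.erase x) y) C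

/-- The relation `a <_e b` on the leaves with locus `e`: there exists
`c ∈ G` with `ac|b ∈ R`. -/
def LtE (R : Finset V → V) (G : Finset V) (a b : V) : Prop :=
  ∃ c ∈ G, R {a, c, b} = b
namespace CPHelp
open RTree

/-- length of longest common prefix of two boolean lists -/
def lcpB : List Bool → List Bool → ℕ
  | a :: as, b :: bs => if a = b then lcpB as bs + 1 else 0
  | _, _ => 0

lemma lcpB_comm : ∀ p q : List Bool, lcpB p q = lcpB q p
  | a :: as, b :: bs => by
    by_cases h : a = b
    · subst h; simp [lcpB, lcpB_comm as bs]
    · simp [lcpB, h, Ne.symm h]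
  | [], [] => rfl
  | [], _ :: _ => rfl
  | _ :: _, [] => rfl

lemma lcpB_ultra : ∀ p q r : List Bool, min (lcpB p q) (lcpB q r) ≤ lcpB p r
  | a :: as, b :: bs, c :: cs => by
    by_cases h1 : a = b <;> by_cases h2 : b = c
    · subst h1; subst h2
      have := lcpB_ultra as bs cs
      simp [lcpB]; omega
    · subst h1; simp [lcpB, h2]
    · subst h2; simp [lcpB, h1]
    · simp [lcpB, h1]
  | [], q, r => by simp [lcpB]
  | _ :: _, [], r => by simp [lcpB]
  | _ :: _, _ :: _, [] => by simp [lcpB]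

variable {V : Type*} [DecidableEq V]

def findPath : RTree V → V → Option (List Bool)
  | .leaf y, x => if x = y then some [] else none
  | .node l r, x =>
      match findPath l x with
      | some p => some (false :: p)
      | none => (findPath r x).map (fun p => true :: p)

lemma mem_leaves_node {l r : RTree V} {x : V} :
    x ∈ (RTree.node l r).leaves ↔ x ∈ l.leaves ∨ x ∈ r.leaves := by
  simp [RTree.leaves, RTree.leafList]

lemma findPath_isSome {t : RTree V} {x : V} : x ∈ t.leaves ↔ (findPath t x).isSome := by
  induction t with
  | leaf y =>
      simp only [RTree.leaves, RTree.leafList, List.toFinset_cons, List.toFinset_nil,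
        LawfulSingleton.insert_empty_eq, Finset.mem_singleton, findPath]
      split <;> simp_all
  | node l r ihl ihr =>
      rw [mem_leaves_node, ihl, ihr]
      simp only [findPath]
      cases h : findPath l x with
      | none => simp [h] at ihl ⊢
      | some p => simp [h] at ihl ⊢

lemma path_of_mem {t : RTree V} {x : V} (h : x ∈ t.leaves) :
    ∃ p, findPath t x = some p := by
  have h2 := findPath_isSome.mp h
  exact ⟨(findPath t x).get h2, by simp⟩

lemma proper_node {l r : RTree V} : (RTree.node l r).Proper ↔
    l.Proper ∧ r.Proper ∧ ∀ x, x ∈ l.leaves → x ∉ r.leaves := by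
  simp [RTree.Proper, RTree.leafList, List.nodup_append, RTree.leaves, List.Disjoint]
  grind

end CPHelp
namespace CPHelp
variable {V : Type*} [DecidableEq V]

lemma findPath_node_cases {l r : RTree V} {x : V} {p : List Bool}
    (h : findPath (RTree.node l r) x = some p) :
    (∃ q, findPath l x = some q ∧ p = false :: q) ∨
    (findPath l x = none ∧ ∃ q, findPath r x = some q ∧ p = true :: q) := by
  simp only [findPath] at h
  cases h1 : findPath l x with
  | some q => left; rw [h1] at h; simp at h; exact ⟨q, rfl, h.symm⟩
  | none =>
      right; rw [h1] at h; simp at h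
      obtain ⟨q, hq, hpq⟩ := h
      exact ⟨rfl, q, hq, hpq.symm⟩

lemma mem_of_findPath {t : RTree V} {x : V} {p : List Bool}
    (h : findPath t x = some p) : x ∈ t.leaves := by
  rw [findPath_isSome, h]; rfl

lemma not_mem_of_findPath_none {t : RTree V} {x : V}
    (h : findPath t x = none) : x ∉ t.leaves := by
  rw [findPath_isSome, h]; simp

lemma consistent_iff : ∀ (t : RTree V), t.Proper →
    ∀ {a b c : V} {pa pb pc : List Bool},
    findPath t a = some pa → findPath t b = some pb → findPath t c = some pc →
    (t.Consistent a b c ↔ lcpB pa pc < lcpB pa pb ∧ lcpB pb pc < lcpB pa pb) := by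
  intro t
  induction t with
  | leaf y =>
      intro _ a b c pa pb pc ha hb hc
      simp only [findPath] at ha hb hc
      split at ha <;> simp_all [RTree.Consistent]
      try (subst ha hb hc; simp [lcpB])
  | node l r ihl ihr =>
      intro hp a b c pa pb pc ha hb hc
      obtain ⟨hpl, hpr, hdisj⟩ := proper_node.mp hp
      have hdisj' : ∀ x, x ∈ r.leaves → x ∉ l.leaves := fun x hr hl => hdisj x hl hr
      rcases findPath_node_cases ha with ⟨qa, hqa, rfl⟩ | ⟨hna, qa, hqa, rfl⟩ <;>
      rcases findPath_node_cases hb with ⟨qb, hqb, rfl⟩ | ⟨hnb, qb, hqb, rfl⟩ <;>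
      rcases findPath_node_cases hc with ⟨qc, hqc, rfl⟩ | ⟨hnc, qc, hqc, rfl⟩ <;>
      simp only [RTree.Consistent, lcpB, if_pos rfl, reduceIte, Bool.false_eq_true] <;>
      [skip; skip; skip; skip; skip; skip; skip; skip]
      · -- all left
        have := mem_of_findPath hqa; have := mem_of_findPath hqb; have := mem_of_findPath hqc
        rw [ihl hpl hqa hqb hqc]
        simp_all [hdisj _ ‹a ∈ l.leaves›, hdisj _ ‹b ∈ l.leaves›, hdisj _ ‹c ∈ l.leaves›]
        try omega
      · -- a b left, c right
        have := mem_of_findPath hqa; have := mem_of_findPath hqb; have := mem_of_findPath hqc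
        simp_all [hdisj _ ‹a ∈ l.leaves›, hdisj _ ‹b ∈ l.leaves›, hdisj' _ ‹c ∈ r.leaves›]
        try omega
      · have := mem_of_findPath hqa; have := mem_of_findPath hqb; have := mem_of_findPath hqc
        simp_all [hdisj _ ‹a ∈ l.leaves›, hdisj' _ ‹b ∈ r.leaves›, hdisj _ ‹c ∈ l.leaves›]
      · have := mem_of_findPath hqa; have := mem_of_findPath hqb; have := mem_of_findPath hqc
        simp_all [hdisj _ ‹a ∈ l.leaves›, hdisj' _ ‹b ∈ r.leaves›, hdisj' _ ‹c ∈ r.leaves›]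
      · have := mem_of_findPath hqa; have := mem_of_findPath hqb; have := mem_of_findPath hqc
        simp_all [hdisj' _ ‹a ∈ r.leaves›, hdisj _ ‹b ∈ l.leaves›, hdisj _ ‹c ∈ l.leaves›]
      · have := mem_of_findPath hqa; have := mem_of_findPath hqb; have := mem_of_findPath hqc
        simp_all [hdisj' _ ‹a ∈ r.leaves›, hdisj _ ‹b ∈ l.leaves›, hdisj' _ ‹c ∈ r.leaves›]
      · have := mem_of_findPath hqa; have := mem_of_findPath hqb; have := mem_of_findPath hqc
        simp_all [hdisj' _ ‹a ∈ r.leaves›, hdisj' _ ‹b ∈ r.leaves›, hdisj _ ‹c ∈ l.leaves›]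
        try omega
      · -- all right
        have := mem_of_findPath hqa; have := mem_of_findPath hqb; have := mem_of_findPath hqc
        rw [ihr hpr hqa hqb hqc]
        simp_all [hdisj' _ ‹a ∈ r.leaves›, hdisj' _ ‹b ∈ r.leaves›, hdisj' _ ‹c ∈ r.leaves›]
        try omega

end CPHelp
namespace CPHelp
variable {V : Type*} [DecidableEq V]

lemma tripset (x y z : V) : ({y, z, x} : Finset V) = {x, y, z} := by
  ext u; simp; tauto

lemma tripset' (x y z : V) : ({x, z, y} : Finset V) = {x, y, z} := by
  ext u; simp; tauto

/-- From a tree realizing `R` and a consistent triplet, recover the apex value of `R`. -/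
lemma eq_apex [Fintype V] {R : Finset V → V} (hval : TripletValid R Finset.univ)
    {T : RTree V} (hp : T.Proper) {S : Finset V} (hl : T.leaves = S)
    (hr : Realizes T R S) {x y z : V} (hx : x ∈ S) (hy : y ∈ S) (hz : z ∈ S)
    (hxy : x ≠ y) (hxz : x ≠ z) (hyz : y ≠ z)
    (hC : T.Consistent x y z) : R {x, y, z} = z := by
  obtain ⟨px, hpx⟩ := path_of_mem (hl ▸ hx : x ∈ T.leaves)
  obtain ⟨py, hpy⟩ := path_of_mem (hl ▸ hy : y ∈ T.leaves)
  obtain ⟨pz, hpz⟩ := path_of_mem (hl ▸ hz : z ∈ T.leaves)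
  rw [consistent_iff T hp hpx hpy hpz] at hC
  have hmem := hval x y z (Finset.mem_univ _) (Finset.mem_univ _) (Finset.mem_univ _) hxy hxz hyz
  simp only [Finset.mem_insert, Finset.mem_singleton] at hmem
  rcases hmem with h | h | h
  · exfalso
    have hC2 : T.Consistent y z x := by
      apply hr y z x hy hz hx hyz hxy.symm hxz.symm
      rw [tripset x y z]; exact h
    rw [consistent_iff T hp hpy hpz hpx] at hC2
    have c1 := lcpB_comm px py
    have c2 := lcpB_comm px pz
    have c3 := lcpB_comm py pz
    omega
  · exfalso
    have hC2 : T.Consistent x z y := by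
      apply hr x z y hx hz hy hxz hxy hyz.symm
      rw [tripset' x y z]; exact h
    rw [consistent_iff T hp hpx hpz hpy] at hC2
    have c1 := lcpB_comm px py
    have c2 := lcpB_comm px pz
    have c3 := lcpB_comm py pz
    omega
  · exact h

lemma erase_quad {a b c d : V} (had : a ≠ d) (hbd : b ≠ d) (hcd : c ≠ d) :
    ({a, b, c, d} : Finset V).erase d = {a, b, c} := by
  ext u
  simp only [Finset.mem_erase, Finset.mem_insert, Finset.mem_singleton]
  constructor
  · rintro ⟨h1, h2 | h2 | h2 | h2⟩ <;> tauto
  · rintro (h | h | h) <;> subst h <;> exact ⟨by assumption, by tauto⟩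

lemma seed_conflict {R : Finset V → V} {a b c d : V}
    (hab : a ≠ b) (hac : a ≠ c) (hbc : b ≠ c)
    (had : a ≠ d) (hbd : b ≠ d) (hcd : c ≠ d)
    (H : ∀ T : RTree V, T.Proper → T.leaves = {a, b, c, d} →
      (∀ x y z : V, x ∈ ({a, b, c, d} : Finset V) → y ∈ ({a, b, c, d} : Finset V) →
        z ∈ ({a, b, c, d} : Finset V) → x ≠ y → x ≠ z → y ≠ z →
        (x = d ∨ y = d ∨ z = d) → R {x, y, z} = z → T.Consistent x y z) → False) :
    RTISeed R d {a, b, c, d} ∧ ¬ TripletConsistentOn R {a, b, c, d} := by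
  have hdnot : d ∉ ({a, b, c} : Finset V) := by
    simp only [Finset.mem_insert, Finset.mem_singleton]
    push_neg; exact ⟨Ne.symm had, Ne.symm hbd, Ne.symm hcd⟩
  constructor
  · constructor
    · simp
    · intro y _ ⟨T, hp, hl, hr⟩
      apply H T hp hl
      intro x y' z hx hy hz h1 h2 h3 hd hR
      apply hr x y' z hx hy hz h1 h2 h3
      rw [erase_quad had hbd hcd, Function.update_of_ne, hR]
      intro he
      apply hdnot
      rw [← he]
      rcases hd with h | h | h <;> subst h <;> simp
  · intro ⟨T, hp, hl, hr⟩
    exact H T hp hl (fun x y z hx hy hz h1 h2 h3 _ hR => hr x y z hx hy hz h1 h2 h3 hR)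

end CPHelp

open CPHelp

/-- Let `R` be a dense rooted-triplet instance over `V` and `G ⊆ V` such that
`R[G ∪ S]` is consistent for every `S ⊆ V \ G` with `|S| ≤ 2`. Let `B` be a
set of leaves of `V \ G` all having the same locus edge `e` in the tree
realizing `R[G]` (having the same locus is expressed by inducing the same
triplets relative to pairs of leaves of `G`). If moreover, by maximality of
the conflict packing, no 4-subset consisting of three leaves of `B` and one
leaf `d ∈ G` which is a seed of it forms a conflict, then `<_e` is a strict
weak ordering on `B`: `<_e` is asymmetric and transitive, and the
incomparability relation `∼_e` is transitive. -/
theorem ltE_strict_weak_order [Fintype V]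
    (R : Finset V → V) (hval : TripletValid R Finset.univ)
    (G : Finset V)
    (hcons : ∀ S : Finset V, S ⊆ Finset.univ \ G → S.card ≤ 2 →
      TripletConsistentOn R (G ∪ S))
    (B : Finset V) (hBG : B ⊆ Finset.univ \ G)
    (hsame : ∀ a ∈ B, ∀ b ∈ B, ∀ c ∈ G, ∀ d ∈ G, c ≠ d →
      ((R {a, c, d} = c ↔ R {b, c, d} = c) ∧ (R {a, c, d} = d ↔ R {b, c, d} = d)))
    (hmax : ∀ d ∈ G, ∀ a ∈ B, ∀ b ∈ B, ∀ c ∈ B, a ≠ b → a ≠ c → b ≠ c →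
      ¬ (RTISeed R d {a, b, c, d} ∧ ¬ TripletConsistentOn R {a, b, c, d})) :
    (∀ a ∈ B, ∀ b ∈ B, a ≠ b → ¬ (LtE R G a b ∧ LtE R G b a)) ∧
    (∀ a ∈ B, ∀ b ∈ B, ∀ c ∈ B, a ≠ b → a ≠ c → b ≠ c →
      LtE R G a b → LtE R G b c → LtE R G a c) ∧
    (∀ a ∈ B, ∀ b ∈ B, ∀ c ∈ B, a ≠ b → a ≠ c → b ≠ c →
      (¬ LtE R G a b ∧ ¬ LtE R G b a) → (¬ LtE R G b c ∧ ¬ LtE R G c b) →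
      (¬ LtE R G a c ∧ ¬ LtE R G c a)) := by
  classical
  have hnotG : ∀ x ∈ B, x ∉ G := fun x hx => (Finset.mem_sdiff.mp (hBG hx)).2
  have hne : ∀ x ∈ B, ∀ d ∈ G, x ≠ d := fun x hx d hd h => hnotG x hx (h ▸ hd)
  have tree2 : ∀ x ∈ B, ∀ y ∈ B, TripletConsistentOn R (G ∪ {x, y}) := by
    intro x hx y hy
    apply hcons {x, y}
    · intro u hu
      rcases Finset.mem_insert.mp hu with h | h
      · exact h ▸ hBG hx
      · exact (Finset.mem_singleton.mp h) ▸ hBG hy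
    · exact (Finset.card_insert_le _ _).trans (by simp)
  -- ==================== asymmetry ====================
  have hasym : ∀ a ∈ B, ∀ b ∈ B, a ≠ b → ¬ (LtE R G a b ∧ LtE R G b a) := by
    rintro a ha b hb hab ⟨⟨d, hdG, hd⟩, ⟨e, heG, he⟩⟩
    obtain ⟨T, hp, hl, hr⟩ := tree2 a ha b hb
    have hmA : a ∈ G ∪ {a, b} := by simp
    have hmB : b ∈ G ∪ {a, b} := by simp
    have hmD : d ∈ G ∪ {a, b} := Finset.mem_union_left _ hdG
    have hmE : e ∈ G ∪ {a, b} := Finset.mem_union_left _ heG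
    have had : a ≠ d := hne a ha d hdG
    have hae : a ≠ e := hne a ha e heG
    have hbd : b ≠ d := hne b hb d hdG
    have hbe : b ≠ e := hne b hb e heG
    have h1 : T.Consistent a d b := hr a d b hmA hmD hmB had hab (Ne.symm hbd) hd
    have h2 : T.Consistent b e a := hr b e a hmB hmE hmA hbe (Ne.symm hab) (Ne.symm hae) he
    obtain ⟨pA, hpA⟩ := path_of_mem (hl ▸ hmA : a ∈ T.leaves)
    obtain ⟨pB, hpB⟩ := path_of_mem (hl ▸ hmB : b ∈ T.leaves)
    obtain ⟨pD, hpD⟩ := path_of_mem (hl ▸ hmD : d ∈ T.leaves)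
    obtain ⟨pE, hpE⟩ := path_of_mem (hl ▸ hmE : e ∈ T.leaves)
    rw [consistent_iff T hp hpA hpD hpB] at h1
    rw [consistent_iff T hp hpB hpE hpA] at h2
    have uc1 := lcpB_comm pA pB
    have uc2 := lcpB_comm pA pD
    have uc3 := lcpB_comm pA pE
    have uc4 := lcpB_comm pB pD
    have uc5 := lcpB_comm pB pE
    have uc6 := lcpB_comm pD pE
    have uu1 := lcpB_ultra pA pB pD
    have uu2 := lcpB_ultra pB pD pA
    have uu3 := lcpB_ultra pD pA pB
    have uu4 := lcpB_ultra pA pB pE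
    have uu5 := lcpB_ultra pB pE pA
    have uu6 := lcpB_ultra pE pA pB
    have uu7 := lcpB_ultra pA pD pE
    have uu8 := lcpB_ultra pD pE pA
    have uu9 := lcpB_ultra pE pA pD
    have uu10 := lcpB_ultra pB pD pE
    have uu11 := lcpB_ultra pD pE pB
    have uu12 := lcpB_ultra pE pB pD
    by_cases hde : d = e
    · rw [hde] at hpD
      rw [hpE] at hpD
      have hED : pE = pD := Option.some.inj hpD
      subst hED
      omega
    · have hC1 : T.Consistent a d e := by
        rw [consistent_iff T hp hpA hpD hpE]; omega
      have hC2 : T.Consistent b e d := by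
        rw [consistent_iff T hp hpB hpE hpD]; omega
      have r1 : R {a, d, e} = e := eq_apex hval hp hl hr hmA hmD hmE had hae hde hC1
      have r2 : R {b, e, d} = d := eq_apex hval hp hl hr hmB hmE hmD hbe hbd (Ne.symm hde) hC2
      have r2' : R {b, d, e} = d := by rw [tripset' b e d]; exact r2
      have hs := (hsame a ha b hb d hdG e heG hde).2
      exact hde (r2'.symm.trans (hs.mp r1))
  -- ==================== claim A ====================
  have claimA : ∀ a ∈ B, ∀ b ∈ B, ∀ c ∈ B, a ≠ b → b ≠ c → a ≠ c →
      ∀ d ∈ G, ∀ e ∈ G, R {a, d, b} = b → R {b, e, c} = c → R {b, d, c} = c := by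
    intro a ha b hb c hc hab hbc hac d hdG e heG h1 h2
    by_cases hde : d = e
    · subst hde; exact h2
    have had : a ≠ d := hne a ha d hdG
    have hae : a ≠ e := hne a ha e heG
    have hbd : b ≠ d := hne b hb d hdG
    have hbe : b ≠ e := hne b hb e heG
    have hcd : c ≠ d := hne c hc d hdG
    have hce : c ≠ e := hne c hc e heG
    have hmem := hval a d e (Finset.mem_univ _) (Finset.mem_univ _) (Finset.mem_univ _) had hae hde
    simp only [Finset.mem_insert, Finset.mem_singleton] at hmem
    have hsab := hsame a ha b hb d hdG e heG hde
    have hsac := hsame a ha c hc d hdG e heG hde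
    rcases hmem with hv | hv | hv
    · -- R {a,d,e} = a : then R{b,d,e}=b, R{c,d,e}=c
      have hbv : R {b, d, e} = b := by
        have hm := hval b d e (Finset.mem_univ _) (Finset.mem_univ _) (Finset.mem_univ _) hbd hbe hde
        simp only [Finset.mem_insert, Finset.mem_singleton] at hm
        rcases hm with h | h | h
        · exact h
        · exact absurd (hv.symm.trans (hsab.1.mpr h)) had
        · exact absurd (hv.symm.trans (hsab.2.mpr h)) hae
      have hcv : R {c, d, e} = c := by
        have hm := hval c d e (Finset.mem_univ _) (Finset.mem_univ _) (Finset.mem_univ _) hcd hce hde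
        simp only [Finset.mem_insert, Finset.mem_singleton] at hm
        rcases hm with h | h | h
        · exact h
        · exact absurd (hv.symm.trans (hsac.1.mpr h)) had
        · exact absurd (hv.symm.trans (hsac.2.mpr h)) hae
      obtain ⟨T, hp, hl, hr⟩ := tree2 b hb c hc
      have hmB : b ∈ G ∪ {b, c} := by simp
      have hmC : c ∈ G ∪ {b, c} := by simp
      have hmD : d ∈ G ∪ {b, c} := Finset.mem_union_left _ hdG
      have hmE : e ∈ G ∪ {b, c} := Finset.mem_union_left _ heG
      have g1 : T.Consistent d e b := hr d e b hmD hmE hmB hde (Ne.symm hbd) (Ne.symm hbe)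
        (by rw [tripset b d e]; exact hbv)
      have g2 : T.Consistent d e c := hr d e c hmD hmE hmC hde (Ne.symm hcd) (Ne.symm hce)
        (by rw [tripset c d e]; exact hcv)
      have g3 : T.Consistent b e c := hr b e c hmB hmE hmC hbe hbc (Ne.symm hce) h2
      obtain ⟨pB, hpB⟩ := path_of_mem (hl ▸ hmB : b ∈ T.leaves)
      obtain ⟨pC, hpC⟩ := path_of_mem (hl ▸ hmC : c ∈ T.leaves)
      obtain ⟨pD, hpD⟩ := path_of_mem (hl ▸ hmD : d ∈ T.leaves)
      obtain ⟨pE, hpE⟩ := path_of_mem (hl ▸ hmE : e ∈ T.leaves)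
      rw [consistent_iff T hp hpD hpE hpB] at g1
      rw [consistent_iff T hp hpD hpE hpC] at g2
      rw [consistent_iff T hp hpB hpE hpC] at g3
      have uc1 := lcpB_comm pB pC
      have uc2 := lcpB_comm pB pD
      have uc3 := lcpB_comm pB pE
      have uc4 := lcpB_comm pC pD
      have uc5 := lcpB_comm pC pE
      have uc6 := lcpB_comm pD pE
      have uu1 := lcpB_ultra pB pC pD
      have uu2 := lcpB_ultra pC pD pB
      have uu3 := lcpB_ultra pD pB pC
      have uu4 := lcpB_ultra pB pC pE
      have uu5 := lcpB_ultra pC pE pB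
      have uu6 := lcpB_ultra pE pB pC
      have uu7 := lcpB_ultra pB pD pE
      have uu8 := lcpB_ultra pD pE pB
      have uu9 := lcpB_ultra pE pB pD
      have uu10 := lcpB_ultra pC pD pE
      have uu11 := lcpB_ultra pD pE pC
      have uu12 := lcpB_ultra pE pC pD
      have gC : T.Consistent b d c := by
        rw [consistent_iff T hp hpB hpD hpC]; omega
      exact eq_apex hval hp hl hr hmB hmD hmC hbd hbc (Ne.symm hcd) gC
    · -- R {a,d,e} = d : contradiction in tree over G ∪ {a,b}
      exfalso
      have hbv : R {b, d, e} = d := hsab.1.mp hv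
      obtain ⟨T, hp, hl, hr⟩ := tree2 a ha b hb
      have hmA : a ∈ G ∪ {a, b} := by simp
      have hmB : b ∈ G ∪ {a, b} := by simp
      have hmD : d ∈ G ∪ {a, b} := Finset.mem_union_left _ hdG
      have hmE : e ∈ G ∪ {a, b} := Finset.mem_union_left _ heG
      have g1 : T.Consistent a d b := hr a d b hmA hmD hmB had hab (Ne.symm hbd) h1
      have g2 : T.Consistent a e d := hr a e d hmA hmE hmD hae had (Ne.symm hde)
        (by rw [tripset' a d e]; exact hv)
      have g3 : T.Consistent b e d := hr b e d hmB hmE hmD hbe hbd (Ne.symm hde)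
        (by rw [tripset' b d e]; exact hbv)
      obtain ⟨pA, hpA⟩ := path_of_mem (hl ▸ hmA : a ∈ T.leaves)
      obtain ⟨pB, hpB⟩ := path_of_mem (hl ▸ hmB : b ∈ T.leaves)
      obtain ⟨pD, hpD⟩ := path_of_mem (hl ▸ hmD : d ∈ T.leaves)
      obtain ⟨pE, hpE⟩ := path_of_mem (hl ▸ hmE : e ∈ T.leaves)
      rw [consistent_iff T hp hpA hpD hpB] at g1
      rw [consistent_iff T hp hpA hpE hpD] at g2
      rw [consistent_iff T hp hpB hpE hpD] at g3
      have uc1 := lcpB_comm pA pB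
      have uc2 := lcpB_comm pA pD
      have uc3 := lcpB_comm pA pE
      have uc4 := lcpB_comm pB pD
      have uc5 := lcpB_comm pB pE
      have uc6 := lcpB_comm pD pE
      have uu1 := lcpB_ultra pA pB pD
      have uu2 := lcpB_ultra pB pD pA
      have uu3 := lcpB_ultra pD pA pB
      have uu4 := lcpB_ultra pA pB pE
      have uu5 := lcpB_ultra pB pE pA
      have uu6 := lcpB_ultra pE pA pB
      have uu7 := lcpB_ultra pA pD pE
      have uu8 := lcpB_ultra pD pE pA
      have uu9 := lcpB_ultra pE pA pD
      have uu10 := lcpB_ultra pB pD pE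
      have uu11 := lcpB_ultra pD pE pB
      have uu12 := lcpB_ultra pE pB pD
      omega
    · -- R {a,d,e} = e
      have hbv : R {b, d, e} = e := hsab.2.mp hv
      have hcv : R {c, d, e} = e := hsac.2.mp hv
      obtain ⟨T, hp, hl, hr⟩ := tree2 b hb c hc
      have hmB : b ∈ G ∪ {b, c} := by simp
      have hmC : c ∈ G ∪ {b, c} := by simp
      have hmD : d ∈ G ∪ {b, c} := Finset.mem_union_left _ hdG
      have hmE : e ∈ G ∪ {b, c} := Finset.mem_union_left _ heG
      have g1 : T.Consistent b d e := hr b d e hmB hmD hmE hbd hbe hde hbv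
      have g2 : T.Consistent c d e := hr c d e hmC hmD hmE hcd hce hde hcv
      have g3 : T.Consistent b e c := hr b e c hmB hmE hmC hbe hbc (Ne.symm hce) h2
      obtain ⟨pB, hpB⟩ := path_of_mem (hl ▸ hmB : b ∈ T.leaves)
      obtain ⟨pC, hpC⟩ := path_of_mem (hl ▸ hmC : c ∈ T.leaves)
      obtain ⟨pD, hpD⟩ := path_of_mem (hl ▸ hmD : d ∈ T.leaves)
      obtain ⟨pE, hpE⟩ := path_of_mem (hl ▸ hmE : e ∈ T.leaves)
      rw [consistent_iff T hp hpB hpD hpE] at g1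
      rw [consistent_iff T hp hpC hpD hpE] at g2
      rw [consistent_iff T hp hpB hpE hpC] at g3
      have uc1 := lcpB_comm pB pC
      have uc2 := lcpB_comm pB pD
      have uc3 := lcpB_comm pB pE
      have uc4 := lcpB_comm pC pD
      have uc5 := lcpB_comm pC pE
      have uc6 := lcpB_comm pD pE
      have uu1 := lcpB_ultra pB pC pD
      have uu2 := lcpB_ultra pC pD pB
      have uu3 := lcpB_ultra pD pB pC
      have uu4 := lcpB_ultra pB pC pE
      have uu5 := lcpB_ultra pC pE pB
      have uu6 := lcpB_ultra pE pB pC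
      have uu7 := lcpB_ultra pB pD pE
      have uu8 := lcpB_ultra pD pE pB
      have uu9 := lcpB_ultra pE pB pD
      have uu10 := lcpB_ultra pC pD pE
      have uu11 := lcpB_ultra pD pE pC
      have uu12 := lcpB_ultra pE pC pD
      have gC : T.Consistent b d c := by
        rw [consistent_iff T hp hpB hpD hpC]; omega
      exact eq_apex hval hp hl hr hmB hmD hmC hbd hbc (Ne.symm hcd) gC
  refine ⟨hasym, ?_, ?_⟩
  -- ==================== transitivity ====================
  · rintro a ha b hb c hc hab hac hbc ⟨d, hdG, h1⟩ ⟨e, heG, h2⟩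
    have h3 : R {b, d, c} = c := claimA a ha b hb c hc hab hbc hac d hdG e heG h1 h2
    have had : a ≠ d := hne a ha d hdG
    have hbd : b ≠ d := hne b hb d hdG
    have hcd : c ≠ d := hne c hc d hdG
    refine ⟨d, hdG, ?_⟩
    have hmem := hval a d c (Finset.mem_univ _) (Finset.mem_univ _) (Finset.mem_univ _) had hac (Ne.symm hcd)
    simp only [Finset.mem_insert, Finset.mem_singleton] at hmem
    rcases hmem with hv | hv | hv
    · exfalso
      apply hmax d hdG a ha b hb c hc hab hac hbc
      apply seed_conflict hab hac hbc had hbd hcd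
      intro T hp hl hre
      have g1 := hre a d b (by simp) (by simp) (by simp) had hab (Ne.symm hbd)
        (Or.inr (Or.inl rfl)) h1
      have g2 := hre b d c (by simp) (by simp) (by simp) hbd hbc (Ne.symm hcd)
        (Or.inr (Or.inl rfl)) h3
      have g3 : T.Consistent c d a := hre c d a (by simp) (by simp) (by simp) hcd
        (Ne.symm hac) (Ne.symm had) (Or.inr (Or.inl rfl))
        (by rw [show ({c, d, a} : Finset V) = {a, d, c} from by ext u; simp; tauto]; exact hv)
      obtain ⟨pA, hpA⟩ := path_of_mem (show a ∈ T.leaves from hl ▸ by simp)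
      obtain ⟨pB, hpB⟩ := path_of_mem (show b ∈ T.leaves from hl ▸ by simp)
      obtain ⟨pC, hpC⟩ := path_of_mem (show c ∈ T.leaves from hl ▸ by simp)
      obtain ⟨pD, hpD⟩ := path_of_mem (show d ∈ T.leaves from hl ▸ by simp)
      rw [consistent_iff T hp hpA hpD hpB] at g1
      rw [consistent_iff T hp hpB hpD hpC] at g2
      rw [consistent_iff T hp hpC hpD hpA] at g3
      have uc1 := lcpB_comm pA pB
      have uc2 := lcpB_comm pA pC
      have uc3 := lcpB_comm pA pD
      have uc4 := lcpB_comm pB pC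
      have uc5 := lcpB_comm pB pD
      have uc6 := lcpB_comm pC pD
      have uu1 := lcpB_ultra pA pB pC
      have uu2 := lcpB_ultra pB pC pA
      have uu3 := lcpB_ultra pC pA pB
      have uu4 := lcpB_ultra pA pB pD
      have uu5 := lcpB_ultra pB pD pA
      have uu6 := lcpB_ultra pD pA pB
      have uu7 := lcpB_ultra pA pC pD
      have uu8 := lcpB_ultra pC pD pA
      have uu9 := lcpB_ultra pD pA pC
      have uu10 := lcpB_ultra pB pC pD
      have uu11 := lcpB_ultra pC pD pB
      have uu12 := lcpB_ultra pD pB pC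
      omega
    · exfalso
      apply hmax d hdG a ha b hb c hc hab hac hbc
      apply seed_conflict hab hac hbc had hbd hcd
      intro T hp hl hre
      have g1 := hre a d b (by simp) (by simp) (by simp) had hab (Ne.symm hbd)
        (Or.inr (Or.inl rfl)) h1
      have g2 := hre b d c (by simp) (by simp) (by simp) hbd hbc (Ne.symm hcd)
        (Or.inr (Or.inl rfl)) h3
      have g3 : T.Consistent a c d := hre a c d (by simp) (by simp) (by simp) hac had
        hcd (Or.inr (Or.inr rfl))
        (by rw [show ({a, c, d} : Finset V) = {a, d, c} from by ext u; simp; tauto]; exact hv)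
      obtain ⟨pA, hpA⟩ := path_of_mem (show a ∈ T.leaves from hl ▸ by simp)
      obtain ⟨pB, hpB⟩ := path_of_mem (show b ∈ T.leaves from hl ▸ by simp)
      obtain ⟨pC, hpC⟩ := path_of_mem (show c ∈ T.leaves from hl ▸ by simp)
      obtain ⟨pD, hpD⟩ := path_of_mem (show d ∈ T.leaves from hl ▸ by simp)
      rw [consistent_iff T hp hpA hpD hpB] at g1
      rw [consistent_iff T hp hpB hpD hpC] at g2
      rw [consistent_iff T hp hpA hpC hpD] at g3
      have uc1 := lcpB_comm pA pB
      have uc2 := lcpB_comm pA pC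
      have uc3 := lcpB_comm pA pD
      have uc4 := lcpB_comm pB pC
      have uc5 := lcpB_comm pB pD
      have uc6 := lcpB_comm pC pD
      have uu1 := lcpB_ultra pA pB pC
      have uu2 := lcpB_ultra pB pC pA
      have uu3 := lcpB_ultra pC pA pB
      have uu4 := lcpB_ultra pA pB pD
      have uu5 := lcpB_ultra pB pD pA
      have uu6 := lcpB_ultra pD pA pB
      have uu7 := lcpB_ultra pA pC pD
      have uu8 := lcpB_ultra pC pD pA
      have uu9 := lcpB_ultra pD pA pC
      have uu10 := lcpB_ultra pB pC pD
      have uu11 := lcpB_ultra pC pD pB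
      have uu12 := lcpB_ultra pD pB pC
      omega
    · exact hv
  -- ==================== incomparability transitivity ====================
  · rintro a ha b hb c hc hab hac hbc ⟨nab, nba⟩ ⟨nbc, ncb⟩
    have had' : ∀ d ∈ G, a ≠ d := fun d hd => hne a ha d hd
    constructor
    · rintro ⟨d, hdG, hv⟩
      have had : a ≠ d := hne a ha d hdG
      have hbd : b ≠ d := hne b hb d hdG
      have hcd : c ≠ d := hne c hc d hdG
      have h1 : R {a, d, b} = d := by
        have hm := hval a d b (Finset.mem_univ _) (Finset.mem_univ _) (Finset.mem_univ _) had hab (Ne.symm hbd)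
        simp only [Finset.mem_insert, Finset.mem_singleton] at hm
        rcases hm with h | h | h
        · exact absurd ⟨d, hdG, by
            rw [show ({b, d, a} : Finset V) = {a, d, b} from by ext u; simp; tauto]; exact h⟩ nba
        · exact h
        · exact absurd ⟨d, hdG, h⟩ nab
      have h2 : R {b, d, c} = d := by
        have hm := hval b d c (Finset.mem_univ _) (Finset.mem_univ _) (Finset.mem_univ _) hbd hbc (Ne.symm hcd)
        simp only [Finset.mem_insert, Finset.mem_singleton] at hm
        rcases hm with h | h | h
        · exact absurd ⟨d, hdG, by
            rw [show ({c, d, b} : Finset V) = {b, d, c} from by ext u; simp; tauto]; exact h⟩ ncb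
        · exact h
        · exact absurd ⟨d, hdG, h⟩ nbc
      apply hmax d hdG a ha b hb c hc hab hac hbc
      apply seed_conflict hab hac hbc had hbd hcd
      intro T hp hl hre
      have g1 : T.Consistent a d c := hre a d c (by simp) (by simp) (by simp) had hac
        (Ne.symm hcd) (Or.inr (Or.inl rfl)) hv
      have g2 : T.Consistent a b d := hre a b d (by simp) (by simp) (by simp) hab had
        hbd (Or.inr (Or.inr rfl))
        (by rw [show ({a, b, d} : Finset V) = {a, d, b} from by ext u; simp; tauto]; exact h1)
      have g3 : T.Consistent b c d := hre b c d (by simp) (by simp) (by simp) hbc hbd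
        hcd (Or.inr (Or.inr rfl))
        (by rw [show ({b, c, d} : Finset V) = {b, d, c} from by ext u; simp; tauto]; exact h2)
      obtain ⟨pA, hpA⟩ := path_of_mem (show a ∈ T.leaves from hl ▸ by simp)
      obtain ⟨pB, hpB⟩ := path_of_mem (show b ∈ T.leaves from hl ▸ by simp)
      obtain ⟨pC, hpC⟩ := path_of_mem (show c ∈ T.leaves from hl ▸ by simp)
      obtain ⟨pD, hpD⟩ := path_of_mem (show d ∈ T.leaves from hl ▸ by simp)
      rw [consistent_iff T hp hpA hpD hpC] at g1
      rw [consistent_iff T hp hpA hpB hpD] at g2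
      rw [consistent_iff T hp hpB hpC hpD] at g3
      have uc1 := lcpB_comm pA pB
      have uc2 := lcpB_comm pA pC
      have uc3 := lcpB_comm pA pD
      have uc4 := lcpB_comm pB pC
      have uc5 := lcpB_comm pB pD
      have uc6 := lcpB_comm pC pD
      have uu1 := lcpB_ultra pA pB pC
      have uu2 := lcpB_ultra pB pC pA
      have uu3 := lcpB_ultra pC pA pB
      have uu4 := lcpB_ultra pA pB pD
      have uu5 := lcpB_ultra pB pD pA
      have uu6 := lcpB_ultra pD pA pB
      have uu7 := lcpB_ultra pA pC pD
      have uu8 := lcpB_ultra pC pD pA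
      have uu9 := lcpB_ultra pD pA pC
      have uu10 := lcpB_ultra pB pC pD
      have uu11 := lcpB_ultra pC pD pB
      have uu12 := lcpB_ultra pD pB pC
      omega
    · rintro ⟨d, hdG, hv⟩
      have had : a ≠ d := hne a ha d hdG
      have hbd : b ≠ d := hne b hb d hdG
      have hcd : c ≠ d := hne c hc d hdG
      have h1 : R {c, d, b} = d := by
        have hm := hval c d b (Finset.mem_univ _) (Finset.mem_univ _) (Finset.mem_univ _) hcd (Ne.symm hbc) (Ne.symm hbd)
        simp only [Finset.mem_insert, Finset.mem_singleton] at hm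
        rcases hm with h | h | h
        · exact absurd ⟨d, hdG, by
            rw [show ({b, d, c} : Finset V) = {c, d, b} from by ext u; simp; tauto]; exact h⟩ nbc
        · exact h
        · exact absurd ⟨d, hdG, h⟩ ncb
      have h2 : R {b, d, a} = d := by
        have hm := hval b d a (Finset.mem_univ _) (Finset.mem_univ _) (Finset.mem_univ _) hbd (Ne.symm hab) (Ne.symm had)
        simp only [Finset.mem_insert, Finset.mem_singleton] at hm
        rcases hm with h | h | h
        · exact absurd ⟨d, hdG, by
            rw [show ({a, d, b} : Finset V) = {b, d, a} from by ext u; simp; tauto]; exact h⟩ nab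
        · exact h
        · exact absurd ⟨d, hdG, h⟩ nba
      apply hmax d hdG a ha b hb c hc hab hac hbc
      apply seed_conflict hab hac hbc had hbd hcd
      intro T hp hl hre
      have g1 : T.Consistent c d a := hre c d a (by simp) (by simp) (by simp) hcd
        (Ne.symm hac) (Ne.symm had) (Or.inr (Or.inl rfl)) hv
      have g2 : T.Consistent c b d := hre c b d (by simp) (by simp) (by simp)
        (Ne.symm hbc) hcd hbd (Or.inr (Or.inr rfl))
        (by rw [show ({c, b, d} : Finset V) = {c, d, b} from by ext u; simp; tauto]; exact h1)
      have g3 : T.Consistent b a d := hre b a d (by simp) (by simp) (by simp)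
        (Ne.symm hab) hbd had (Or.inr (Or.inr rfl))
        (by rw [show ({b, a, d} : Finset V) = {b, d, a} from by ext u; simp; tauto]; exact h2)
      obtain ⟨pA, hpA⟩ := path_of_mem (show a ∈ T.leaves from hl ▸ by simp)
      obtain ⟨pB, hpB⟩ := path_of_mem (show b ∈ T.leaves from hl ▸ by simp)
      obtain ⟨pC, hpC⟩ := path_of_mem (show c ∈ T.leaves from hl ▸ by simp)
      obtain ⟨pD, hpD⟩ := path_of_mem (show d ∈ T.leaves from hl ▸ by simp)
      rw [consistent_iff T hp hpC hpD hpA] at g1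
      rw [consistent_iff T hp hpC hpB hpD] at g2
      rw [consistent_iff T hp hpB hpA hpD] at g3
      have uc1 := lcpB_comm pA pB
      have uc2 := lcpB_comm pA pC
      have uc3 := lcpB_comm pA pD
      have uc4 := lcpB_comm pB pC
      have uc5 := lcpB_comm pB pD
      have uc6 := lcpB_comm pC pD
      have uu1 := lcpB_ultra pA pB pC
      have uu2 := lcpB_ultra pB pC pA
      have uu3 := lcpB_ultra pC pA pB
      have uu4 := lcpB_ultra pA pB pD
      have uu5 := lcpB_ultra pB pD pA
      have uu6 := lcpB_ultra pD pA pB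
      have uu7 := lcpB_ultra pA pC pD
      have uu8 := lcpB_ultra pC pD pA
      have uu9 := lcpB_ultra pD pA pC
      have uu10 := lcpB_ultra pB pC pD
      have uu11 := lcpB_ultra pC pD pB
      have uu12 := lcpB_ultra pD pB pC
      omega
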